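/- Let V be a real vector space equipped with two inner products ⟨·,·⟩ and ⟨·,·⟩'. If ⟨x,x⟩ ≤ ⟨x,x⟩' for all x ∈ V, then for any finite family x₁,…,xₙ ∈ V, the Gram determinants satisfy det(⟨xᵢ,xⱼ⟩) ≤ det(⟨xᵢ,xⱼ⟩'). -/

import Mathlib

open Matrix

lemma psd_det_nonneg {m : Type*} [Fintype m] [DecidableEq m] {A : Matrix m m ℝ}
    (hA : A.PosSemidef) : 0 ≤ A.det := by
  have := hA.1.det_eq_prod_eigenvalues
  rw [this]
  exact Finset.prod_nonneg fun i _ => by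
    simpa using hA.eigenvalues_nonneg i

lemma one_le_det_one_add {m : Type*} [Fintype m] [DecidableEq m] {C : Matrix m m ℝ}
    (hC : C.PosSemidef) : 1 ≤ (1 + C).det := by
  set U : Matrix m m ℝ := (hC.1.eigenvectorUnitary : Matrix m m ℝ)
  have hU : U * star U = 1 := Matrix.mem_unitaryGroup_iff.mp hC.1.eigenvectorUnitary.2
  have key : 1 + C = U * (1 + diagonal (RCLike.ofReal ∘ hC.1.eigenvalues)) * star U := by
    rw [mul_add, add_mul, mul_one, hU]
    congr 1
    exact hC.1.spectral_theorem
  have hU' : star U * U = 1 := Matrix.mem_unitaryGroup_iff'.mp hC.1.eigenvectorUnitary.2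
  rw [key, det_mul, det_mul, mul_comm, ← mul_assoc, ← det_mul, hU', det_one, one_mul]
  have : (1 : Matrix m m ℝ) + diagonal (RCLike.ofReal ∘ hC.1.eigenvalues)
      = diagonal (fun i => 1 + hC.1.eigenvalues i) := by
    rw [← diagonal_one, diagonal_add]
    rfl
  rw [this, det_diagonal]
  calc (1 : ℝ) = ∏ _i : m, 1 := by simp
    _ ≤ ∏ i : m, (1 + hC.1.eigenvalues i) :=
      Finset.prod_le_prod (fun i _ => zero_le_one)
        (fun i _ => by linarith [hC.eigenvalues_nonneg i])

open scoped MatrixOrder in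
lemma det_le_det_add {m : Type*} [Fintype m] [DecidableEq m] {A N : Matrix m m ℝ}
    (hA : A.PosSemidef) (hN : N.PosSemidef) : A.det ≤ (A + N).det := by
  by_cases hd : A.det = 0
  · rw [hd]; exact psd_det_nonneg (hA.add hN)
  · set S := CFC.sqrt A with hS
    have hSpsd : S.PosSemidef := (CFC.sqrt_nonneg A).posSemidef
    have hSS : S * S = A := CFC.sqrt_mul_sqrt_self A hA.nonneg
    have hdS : S.det * S.det = A.det := by rw [← det_mul, hSS]
    have hSdet : IsUnit S.det := by
      refine isUnit_iff_ne_zero.mpr fun h => hd ?_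
      rw [← hdS, h, mul_zero]
    have hSi : S * S⁻¹ = 1 := mul_nonsing_inv _ hSdet
    have hSi' : S⁻¹ * S = 1 := nonsing_inv_mul _ hSdet
    have hCpsd : (S⁻¹ * N * S⁻¹).PosSemidef := by
      have h1 : (S⁻¹).IsHermitian := hSpsd.1.inv
      have := hN.mul_mul_conjTranspose_same S⁻¹
      rwa [h1.eq] at this
    have key : A + N = S * (1 + S⁻¹ * N * S⁻¹) * S := by
      rw [mul_add, mul_one, add_mul, hSS, ← mul_assoc, ← mul_assoc, hSi, one_mul,
        mul_assoc, hSi', mul_one]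
    rw [key, det_mul, det_mul, mul_comm, ← mul_assoc, ← det_mul, hSS]
    nlinarith [one_le_det_one_add hCpsd, psd_det_nonneg hA]

lemma gram_psd {V : Type*} [AddCommGroup V] [Module ℝ V]
    (B : LinearMap.BilinForm ℝ V) (hsymm : ∀ x y, B x y = B y x)
    (hpos : ∀ y, 0 ≤ B y y) {n : ℕ} (x : Fin n → V) :
    (Matrix.of fun i j => B (x i) (x j)).PosSemidef := by
  refine Matrix.PosSemidef.of_dotProduct_mulVec_nonneg ?_ ?_
  · ext i j
    simp [Matrix.IsHermitian, Matrix.conjTranspose_apply, hsymm]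
  · intro v
    have expand : B (∑ i, v i • x i) (∑ j, v j • x j)
        = ∑ j, ∑ i, v i * (v j * B (x i) (x j)) := by
      rw [map_sum]
      refine Finset.sum_congr rfl fun j _ => ?_
      rw [LinearMap.map_smul, map_sum, LinearMap.sum_apply, smul_eq_mul, Finset.mul_sum]
      refine Finset.sum_congr rfl fun i _ => ?_
      simp only [LinearMap.map_smul₂, LinearMap.smul_apply, smul_eq_mul]
      ring
    have key : dotProduct (star v) ((Matrix.of fun i j => B (x i) (x j)) *ᵥ v)
        = B (∑ i, v i • x i) (∑ j, v j • x j) := by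
      rw [expand, Finset.sum_comm]
      simp only [dotProduct, Matrix.mulVec, Matrix.of_apply, star_trivial]
      refine Finset.sum_congr rfl fun i _ => ?_
      rw [Finset.mul_sum]
      exact Finset.sum_congr rfl fun j _ => by ring
    rw [key]
    exact hpos _

/-- Gram determinants: if one inner product dominates another on the diagonal,
then Gram determinants are dominated as well. -/
theorem gram_det_le_gram_det {V : Type*} [AddCommGroup V] [Module ℝ V]
    (B B' : LinearMap.BilinForm ℝ V)
    (hBsymm : ∀ x y, B x y = B y x) (hB'symm : ∀ x y, B' x y = B' y x)
    (hBpos : ∀ x, x ≠ 0 → 0 < B x x) (hB'pos : ∀ x, x ≠ 0 → 0 < B' x x)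
    (hle : ∀ x, B x x ≤ B' x x)
    (n : ℕ) (x : Fin n → V) :
    (Matrix.of fun i j => B (x i) (x j)).det ≤
      (Matrix.of fun i j => B' (x i) (x j)).det := by
  have hBnn : ∀ y, 0 ≤ B y y := by
    intro y
    by_cases hy : y = 0
    · simp [hy]
    · exact (hBpos y hy).le
  have h1 := gram_psd B hBsymm hBnn x
  have h2 := gram_psd (B' - B) (by intro a b; simp [hBsymm, hB'symm])
    (by intro y; simp [sub_nonneg, hle]) x
  have key : (Matrix.of fun i j => B' (x i) (x j))
      = (Matrix.of fun i j => B (x i) (x j)) + Matrix.of fun i j => (B' - B) (x i) (x j) := by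
    ext i j; simp
  rw [key]
  exact det_le_det_add h1 h2
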